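/- Let ε ∈ [0,1), let A ∈ ℝ^{d×n} have full column rank (A is injective as a linear map), and let S : ℝ^d → ℝ^k be a linear map that is an ε-subspace embedding for the range of A. Then for every x ∈ ℝ^n, √(1−ε)·‖Ax‖₂ ≤ ‖SAx‖₂ ≤ √(1+ε)·‖Ax‖₂; consequently SA has full column rank and (sup_{‖x‖₂=1} ‖SAx‖₂)/(inf_{‖x‖₂=1} ‖SAx‖₂) ≤ √((1+ε)/(1−ε)) · (sup_{‖x‖₂=1} ‖Ax‖₂)/(inf_{‖x‖₂=1} ‖Ax‖₂), i.e., κ(SA) ≤ √((1+ε)/(1−ε))·κ(A). -/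

import Mathlib

open RealInnerProductSpace

/-- The image of `A.mulVec x`, viewed as a vector of `EuclideanSpace ℝ (Fin d)`. -/
noncomputable def mulVecEuc {d n : ℕ} (A : Matrix (Fin d) (Fin n) ℝ)
    (x : EuclideanSpace ℝ (Fin n)) : EuclideanSpace ℝ (Fin d) :=
  (WithLp.equiv 2 (Fin d → ℝ)).symm (A.mulVec (WithLp.equiv 2 (Fin n → ℝ) x))

/-- If `A ∈ ℝ^{d×n}` has full column rank and `S` is an `ε`-subspace embedding (`ε ∈ [0,1)`)
for the range of `A`, then `√(1-ε)‖Ax‖ ≤ ‖SAx‖ ≤ √(1+ε)‖Ax‖` for all `x`; consequently `SA`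
has full column rank and `κ(SA) ≤ √((1+ε)/(1-ε))·κ(A)`, where the condition number is
the ratio of the sup and the inf of the norm over the unit sphere. -/
theorem countsketch_stmt7 {d n k : ℕ} (ε : ℝ) (hε0 : 0 ≤ ε) (hε1 : ε < 1)
    (A : Matrix (Fin d) (Fin n) ℝ)
    (hA : Function.Injective fun x : EuclideanSpace ℝ (Fin n) => mulVecEuc A x)
    (S : EuclideanSpace ℝ (Fin d) →ₗ[ℝ] EuclideanSpace ℝ (Fin k))
    (hS : ∀ x y : EuclideanSpace ℝ (Fin n),
      |⟪mulVecEuc A x, mulVecEuc A y⟫ - ⟪S (mulVecEuc A x), S (mulVecEuc A y)⟫| ≤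
        ε * ‖mulVecEuc A x‖ * ‖mulVecEuc A y‖) :
    (∀ x : EuclideanSpace ℝ (Fin n),
      Real.sqrt (1 - ε) * ‖mulVecEuc A x‖ ≤ ‖S (mulVecEuc A x)‖ ∧
      ‖S (mulVecEuc A x)‖ ≤ Real.sqrt (1 + ε) * ‖mulVecEuc A x‖) ∧
    Function.Injective (fun x : EuclideanSpace ℝ (Fin n) => S (mulVecEuc A x)) ∧
    (⨆ x : {x : EuclideanSpace ℝ (Fin n) // ‖x‖ = 1}, ‖S (mulVecEuc A x.1)‖) /
        (⨅ x : {x : EuclideanSpace ℝ (Fin n) // ‖x‖ = 1}, ‖S (mulVecEuc A x.1)‖) ≤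
      Real.sqrt ((1 + ε) / (1 - ε)) *
        ((⨆ x : {x : EuclideanSpace ℝ (Fin n) // ‖x‖ = 1}, ‖mulVecEuc A x.1‖) /
          (⨅ x : {x : EuclideanSpace ℝ (Fin n) // ‖x‖ = 1}, ‖mulVecEuc A x.1‖)) := by
  have hTfun : mulVecEuc A = ⇑(Matrix.toEuclideanLin A) := rfl
  set T := Matrix.toEuclideanLin A with hT
  have h1ε : (0:ℝ) < 1 - ε := by linarith
  have h1ε' : (0:ℝ) ≤ 1 + ε := by linarith
  -- key norm bounds
  have key : ∀ x : EuclideanSpace ℝ (Fin n),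
      Real.sqrt (1 - ε) * ‖mulVecEuc A x‖ ≤ ‖S (mulVecEuc A x)‖ ∧
      ‖S (mulVecEuc A x)‖ ≤ Real.sqrt (1 + ε) * ‖mulVecEuc A x‖ := by
    intro x
    have h := hS x x
    rw [real_inner_self_eq_norm_sq, real_inner_self_eq_norm_sq] at h
    have habs := abs_le.mp h
    have h1 : (1 - ε) * ‖mulVecEuc A x‖ ^ 2 ≤ ‖S (mulVecEuc A x)‖ ^ 2 := by
      nlinarith [habs.1, habs.2]
    have h2 : ‖S (mulVecEuc A x)‖ ^ 2 ≤ (1 + ε) * ‖mulVecEuc A x‖ ^ 2 := by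
      nlinarith [habs.1, habs.2]
    constructor
    · have := Real.sqrt_le_sqrt h1
      rwa [Real.sqrt_mul h1ε.le, Real.sqrt_sq (norm_nonneg _), Real.sqrt_sq (norm_nonneg _)]
        at this
    · have := Real.sqrt_le_sqrt h2
      rwa [Real.sqrt_mul h1ε', Real.sqrt_sq (norm_nonneg _), Real.sqrt_sq (norm_nonneg _)]
        at this
  have hsqpos : 0 < Real.sqrt (1 - ε) := Real.sqrt_pos.mpr h1ε
  -- injectivity
  have hinj : Function.Injective (fun x : EuclideanSpace ℝ (Fin n) => S (mulVecEuc A x)) := by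
    intro x y hxy
    apply hA
    show mulVecEuc A x = mulVecEuc A y
    have hz : S (mulVecEuc A (x - y)) = 0 := by
      have : mulVecEuc A (x - y) = mulVecEuc A x - mulVecEuc A y := by
        rw [hTfun]; exact map_sub T x y
      rw [this, map_sub, sub_eq_zero]
      exact hxy
    have h1 := (key (x - y)).1
    rw [hz, norm_zero] at h1
    have hnorm : ‖mulVecEuc A (x - y)‖ = 0 := by
      nlinarith [norm_nonneg (mulVecEuc A (x - y))]
    have : mulVecEuc A (x - y) = 0 := norm_eq_zero.mp hnorm
    have : mulVecEuc A x - mulVecEuc A y = 0 := by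
      rw [hTfun] at this ⊢; rw [← map_sub T x y]; exact this
    exact sub_eq_zero.mp this
  refine ⟨key, hinj, ?_⟩
  -- condition number
  rcases isEmpty_or_nonempty {x : EuclideanSpace ℝ (Fin n) // ‖x‖ = 1} with hE | hNE
  · rw [Real.iSup_of_isEmpty, Real.iSup_of_isEmpty, Real.iInf_of_isEmpty]
    simp
  · set Sph := {x : EuclideanSpace ℝ (Fin n) // ‖x‖ = 1}
    set F : Sph → ℝ := fun x => ‖S (mulVecEuc A x.1)‖ with hF
    set G : Sph → ℝ := fun x => ‖mulVecEuc A x.1‖ with hG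
    -- bounded above
    have hGb : BddAbove (Set.range G) := by
      obtain ⟨C, hC⟩ : ∃ C, ∀ x : Sph, G x ≤ C := by
        refine ⟨‖LinearMap.toContinuousLinearMap T‖, fun x => ?_⟩
        have := (LinearMap.toContinuousLinearMap T).le_opNorm x.1
        simpa [hG, hTfun, x.2] using this
      exact ⟨C, by rintro _ ⟨x, rfl⟩; exact hC x⟩
    have hFb : BddAbove (Set.range F) := by
      obtain ⟨C, hC⟩ : ∃ C, ∀ x : Sph, F x ≤ C := by
        refine ⟨‖LinearMap.toContinuousLinearMap (S.comp T)‖, fun x => ?_⟩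
        have := (LinearMap.toContinuousLinearMap (S.comp T)).le_opNorm x.1
        simpa [hF, hTfun, x.2] using this
      exact ⟨C, by rintro _ ⟨x, rfl⟩; exact hC x⟩
    have hGbdd : BddBelow (Set.range G) := ⟨0, by rintro _ ⟨x, rfl⟩; exact norm_nonneg _⟩
    -- antilipschitz: inf of G positive
    obtain ⟨K, hK0, hK⟩ := LinearMap.exists_antilipschitzWith T (LinearMap.ker_eq_bot.mpr hA)
    have hm' : (K:ℝ)⁻¹ ≤ ⨅ x : Sph, G x := by
      apply le_ciInf
      intro x
      have hle : ‖x.1‖ ≤ (K:ℝ) * ‖T x.1‖ := by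
        have := hK.le_mul_dist x.1 0
        simpa [dist_eq_norm] using this
      rw [x.2] at hle
      show (K:ℝ)⁻¹ ≤ ‖mulVecEuc A x.1‖
      have hle' : 1 ≤ (K:ℝ) * ‖mulVecEuc A x.1‖ := hle
      have hKpos : (0:ℝ) < K := hK0
      rw [inv_eq_one_div, div_le_iff₀ hKpos, mul_comm]
      exact hle'
    have hm'pos : 0 < ⨅ x : Sph, G x :=
      lt_of_lt_of_le (by positivity) hm'
    -- inf bound for F
    have hmF : Real.sqrt (1 - ε) * (⨅ x : Sph, G x) ≤ ⨅ x : Sph, F x := by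
      apply le_ciInf
      intro x
      calc Real.sqrt (1 - ε) * (⨅ y : Sph, G y) ≤ Real.sqrt (1 - ε) * G x := by
            exact mul_le_mul_of_nonneg_left (ciInf_le hGbdd x) hsqpos.le
        _ ≤ F x := (key x.1).1
    have hmFpos : 0 < ⨅ x : Sph, F x :=
      lt_of_lt_of_le (by positivity) hmF
    -- sup bound for F
    have hMF : (⨆ x : Sph, F x) ≤ Real.sqrt (1 + ε) * ⨆ x : Sph, G x := by
      apply ciSup_le
      intro x
      calc F x ≤ Real.sqrt (1 + ε) * G x := (key x.1).2
        _ ≤ Real.sqrt (1 + ε) * ⨆ y : Sph, G y :=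
            mul_le_mul_of_nonneg_left (le_ciSup hGb x) (Real.sqrt_nonneg _)
    have hM'nonneg : 0 ≤ ⨆ x : Sph, G x := by
      obtain ⟨x⟩ := hNE
      exact le_trans (norm_nonneg _) (le_ciSup hGb x)
    calc (⨆ x : Sph, F x) / (⨅ x : Sph, F x)
        ≤ (Real.sqrt (1 + ε) * ⨆ x : Sph, G x) /
            (Real.sqrt (1 - ε) * ⨅ x : Sph, G x) := by
          apply div_le_div₀ (by positivity) hMF (by positivity) hmF
      _ = Real.sqrt ((1 + ε) / (1 - ε)) *
            ((⨆ x : Sph, G x) / (⨅ x : Sph, G x)) := by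
          rw [Real.sqrt_div h1ε', div_mul_div_comm]
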